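/- arXiv:2301.12197 — 4 statements merged into one kernel-verified Lean document; each statement's English description precedes it below -/
import Mathlib

section
/- Let X be a nonempty measurable space and fix a sample size N ≥ 1 and a confidence parameter δ ∈ (0,1). Suppose F : X^N × X^N → ℝ is a measurable function that is a sound high-confidence lower bound on KL divergence, i.e., for every pair of probability measures p, q on X, the set of sample pairs (A,B) ∈ X^N × X^N with F(A,B) ≤ D_KL(p‖q) has (p^{⊗N} ⊗ q^{⊗N})-measure at least 1−δ. Then for every pair of probability measures p, q on X, the set of sample pairs (A,B) with F(A,B) ≤ ln N has (p^{⊗N} ⊗ q^{⊗N})-measure at least 1−4δ. -/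
open MeasureTheory
open scoped Classical

/-- The Kullback–Leibler divergence `D_KL(p‖q)`, valued in the extended reals:
it is `∫ log (dp/dq) dp` when `p ≪ q` and the log-likelihood ratio is integrable,
and `+∞` otherwise. -/
noncomputable def klDiv {X : Type*} [MeasurableSpace X] (p q : Measure X) : EReal :=
  if p ≪ q ∧ Integrable (llr p q) p then ((∫ x, llr p q x ∂p : ℝ) : EReal) else ⊤


open Set
open scoped ENNReal

section AuxiliaryLemmas

lemma myPi_mono {ι : Type*} [Fintype ι] {α : ι → Type*} [∀ i, MeasurableSpace (α i)]
    {μ ν : ∀ i, Measure (α i)} (h : ∀ i, μ i ≤ ν i) : Measure.pi μ ≤ Measure.pi ν := by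
  rw [Measure.le_iff]
  intro s hs
  rw [Measure.pi_def, Measure.pi_def, toMeasure_apply _ _ hs, toMeasure_apply _ _ hs]
  simp only [OuterMeasure.pi, OuterMeasure.boundedBy_apply]
  refine le_iInf fun t => le_iInf fun hsub => ?_
  refine iInf_le_of_le t (iInf_le_of_le hsub (ENNReal.tsum_le_tsum fun n => ?_))
  refine iSup_le fun hne => le_iSup_of_le hne ?_
  simp only [piPremeasure]
  exact Finset.prod_le_prod' fun i _ => by
    simpa using Measure.le_iff'.mp (h i) _

lemma myPi_smul {X : Type*} [MeasurableSpace X] {N : ℕ} (ν : Measure X) [IsFiniteMeasure ν]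
    (a : ℝ≥0∞) (ha : a ≠ ∞) :
    (Measure.pi fun _ : Fin N => a • ν) = a ^ N • Measure.pi (fun _ : Fin N => ν) := by
  haveI hfin : IsFiniteMeasure (a • ν) :=
    ⟨by rw [Measure.smul_apply, smul_eq_mul]
        exact ENNReal.mul_lt_top ha.lt_top (measure_lt_top ν univ)⟩
  refine Measure.pi_eq fun s hs => ?_
  simp only [Measure.smul_apply, Measure.pi_pi, smul_eq_mul, Finset.prod_mul_distrib,
    Finset.prod_const, Finset.card_univ, Fintype.card_fin]

lemma myProd_mono {α β : Type*} [MeasurableSpace α] [MeasurableSpace β]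
    {μ μ' : Measure α} {ν ν' : Measure β} [SFinite ν] [SFinite ν']
    (hμ : μ ≤ μ') (hν : ν ≤ ν') : μ.prod ν ≤ μ'.prod ν' := by
  rw [Measure.le_iff]; intro s hs
  rw [Measure.prod_apply hs, Measure.prod_apply hs]
  exact lintegral_mono' hμ fun x => Measure.le_iff'.mp hν _

lemma mySmul_prod_smul {α β : Type*} [MeasurableSpace α] [MeasurableSpace β]
    (μ : Measure α) (ν : Measure β) [IsFiniteMeasure μ] [IsFiniteMeasure ν]
    (a b : ℝ≥0∞) (ha : a ≠ ∞) (hb : b ≠ ∞) :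
    (a • μ).prod (b • ν) = (a * b) • μ.prod ν := by
  haveI : IsFiniteMeasure (a • μ) :=
    ⟨by rw [Measure.smul_apply, smul_eq_mul]
        exact ENNReal.mul_lt_top ha.lt_top (measure_lt_top μ univ)⟩
  haveI : IsFiniteMeasure (b • ν) :=
    ⟨by rw [Measure.smul_apply, smul_eq_mul]
        exact ENNReal.mul_lt_top hb.lt_top (measure_lt_top ν univ)⟩
  refine Measure.prod_eq fun s t hs ht => ?_
  simp only [Measure.smul_apply, Measure.prod_prod, smul_eq_mul]
  ring

lemma klDiv_le_log_of_bounds {X : Type*} [MeasurableSpace X] {p' m : Measure X}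
    [IsProbabilityMeasure p'] [IsProbabilityMeasure m]
    (hac : p' ≪ m) {c : ℝ} (hc : 0 < c) {Nr : ℝ} (hNr : 1 ≤ Nr)
    (hlow : ∀ᵐ x ∂m, ENNReal.ofReal c ≤ p'.rnDeriv m x)
    (hup : ∀ᵐ x ∂m, p'.rnDeriv m x ≤ ENNReal.ofReal Nr) :
    klDiv p' m ≤ ((Real.log Nr : ℝ) : EReal) := by
  have hb : ∀ᵐ x ∂m, Real.log c ≤ llr p' m x ∧ llr p' m x ≤ Real.log Nr := by
    filter_upwards [hlow, hup] with x h1 h2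
    have hne : p'.rnDeriv m x ≠ ∞ := (h2.trans_lt ENNReal.ofReal_lt_top).ne
    have h1' : c ≤ (p'.rnDeriv m x).toReal := by
      have := ENNReal.toReal_mono hne h1
      rwa [ENNReal.toReal_ofReal hc.le] at this
    have h2' : (p'.rnDeriv m x).toReal ≤ Nr := by
      have := ENNReal.toReal_mono ENNReal.ofReal_ne_top h2
      rwa [ENNReal.toReal_ofReal (by linarith)] at this
    exact ⟨Real.log_le_log hc h1', Real.log_le_log (lt_of_lt_of_le hc h1') h2'⟩
  have hbp : ∀ᵐ x ∂p', Real.log c ≤ llr p' m x ∧ llr p' m x ≤ Real.log Nr := hac.ae_le hb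
  have hint : Integrable (llr p' m) p' := by
    refine Integrable.mono' (integrable_const (max |Real.log c| |Real.log Nr|))
      ((measurable_llr _ _).aestronglyMeasurable) ?_
    filter_upwards [hbp] with x hx
    rw [Real.norm_eq_abs]
    exact abs_le_max_abs_abs hx.1 hx.2
  rw [klDiv, if_pos ⟨hac, hint⟩]
  have hle : ∫ x, llr p' m x ∂p' ≤ Real.log Nr := by
    calc ∫ x, llr p' m x ∂p' ≤ ∫ _, Real.log Nr ∂p' :=
          integral_mono_ae hint (integrable_const _)
            (by filter_upwards [hbp] with x hx using hx.2)
      _ = Real.log Nr := by simp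
  exact_mod_cast hle

lemma pow_ineq : ∀ n : ℕ, 2 ≤ n → (n:ℝ)^n ≤ 4*((n:ℝ)-1)^n := by
  intro n hn
  induction n, hn using Nat.le_induction with
  | base => norm_num
  | succ n hn IH =>
    have hn1 : (1:ℝ) ≤ (n:ℝ) := by exact_mod_cast Nat.one_le_of_lt hn
    have hn0 : (0:ℝ) < (n:ℝ) := by linarith
    have hsq1 : (1:ℝ) ≤ (n:ℝ)^2 := by nlinarith
    have hn2 : (0:ℝ) < (n:ℝ)^2 := by positivity
    have hber : 1 + (n:ℝ) * ((n:ℝ)^2)⁻¹ ≤ (1 + ((n:ℝ)^2)⁻¹)^n :=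
      one_add_mul_le_pow (le_trans (by norm_num : (-2:ℝ) ≤ 0) (inv_nonneg.mpr hn2.le)) n
    have h2 : ((n:ℝ)+1) * ((n:ℝ)^2)^n ≤ (n:ℝ) * ((n:ℝ)^2+1)^n := by
      have hrw : (1 + ((n:ℝ)^2)⁻¹)^n * ((n:ℝ)^2)^n = ((n:ℝ)^2+1)^n := by
        rw [← mul_pow]; congr 1; field_simp
      calc ((n:ℝ)+1) * ((n:ℝ)^2)^n
          = (n:ℝ) * ((1 + (n:ℝ) * ((n:ℝ)^2)⁻¹) * ((n:ℝ)^2)^n) := by field_simp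
        _ ≤ (n:ℝ) * ((n:ℝ)^2+1)^n := by
            refine mul_le_mul_of_nonneg_left ?_ hn0.le
            exact (mul_le_mul_of_nonneg_right hber (le_of_lt (pow_pos hn2 n))).trans_eq hrw
    have h1 : ((n:ℝ)^2-1)^n * ((n:ℝ)^2+1)^n ≤ ((n:ℝ)^2)^n * ((n:ℝ)^2)^n := by
      rw [← mul_pow, ← mul_pow]
      refine pow_le_pow_left₀ (by nlinarith) (by nlinarith) n
    have hB : ((n:ℝ)+1)^(n+1) * ((n:ℝ)-1)^n * ((n:ℝ)^2+1)^n ≤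
        (n:ℝ) * ((n:ℝ)^2)^n * ((n:ℝ)^2+1)^n := by
      have e1 : ((n:ℝ)+1)^(n+1) * ((n:ℝ)-1)^n = ((n:ℝ)+1) * (((n:ℝ)^2-1)^n) := by
        rw [pow_succ]
        have e2 : ((n:ℝ)^2-1) = ((n:ℝ)+1)*((n:ℝ)-1) := by ring
        rw [e2, mul_pow]; ring
      rw [e1]
      calc ((n:ℝ)+1) * ((n:ℝ)^2-1)^n * ((n:ℝ)^2+1)^n
          ≤ ((n:ℝ)+1) * (((n:ℝ)^2)^n * ((n:ℝ)^2)^n) :=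
            by rw [mul_assoc]; exact mul_le_mul_of_nonneg_left h1 (by linarith)
        _ = (((n:ℝ)+1) * ((n:ℝ)^2)^n) * ((n:ℝ)^2)^n := by ring
        _ ≤ ((n:ℝ) * ((n:ℝ)^2+1)^n) * ((n:ℝ)^2)^n :=
            mul_le_mul_of_nonneg_right h2 (le_of_lt (pow_pos hn2 n))
        _ = (n:ℝ) * ((n:ℝ)^2)^n * ((n:ℝ)^2+1)^n := by ring
    have hq : (0:ℝ) < ((n:ℝ)^2+1)^n := by positivity
    have hB' : ((n:ℝ)+1)^(n+1) * ((n:ℝ)-1)^n ≤ (n:ℝ) * ((n:ℝ)^2)^n :=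
      le_of_mul_le_mul_right hB hq
    have hm1 : (0:ℝ) < ((n:ℝ)-1) := by
      have : (2:ℝ) ≤ (n:ℝ) := by exact_mod_cast hn
      linarith
    have hm1p : (0:ℝ) < ((n:ℝ)-1)^n := pow_pos hm1 n
    have key : ((n:ℝ)+1)^(n+1) ≤ 4 * (n:ℝ)^(n+1) := by
      refine le_of_mul_le_mul_right ?_ hm1p
      calc ((n:ℝ)+1)^(n+1) * ((n:ℝ)-1)^n ≤ (n:ℝ) * ((n:ℝ)^2)^n := hB'
        _ = (n:ℝ)^(n+1) * (n:ℝ)^n := by rw [← pow_mul, pow_succ]; ring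
        _ ≤ (n:ℝ)^(n+1) * (4*((n:ℝ)-1)^n) := mul_le_mul_of_nonneg_left IH (by positivity)
        _ = 4*(n:ℝ)^(n+1) * ((n:ℝ)-1)^n := by ring
    push_cast
    calc ((n:ℝ)+1)^(n+1) ≤ 4 * (n:ℝ)^(n+1) := key
      _ = 4 * ((n:ℝ)+1-1)^(n+1) := by norm_num

lemma inv_one_sub_inv_pow_le_four {n : ℕ} (hn : 2 ≤ n) :
    ((1 - (n:ℝ)⁻¹)⁻¹)^n ≤ 4 := by
  have hn0 : (0:ℝ) < (n:ℝ) := by positivity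
  have hn2 : (2:ℝ) ≤ (n:ℝ) := by exact_mod_cast hn
  have h1 : (1 - (n:ℝ)⁻¹) = ((n:ℝ)-1)/(n:ℝ) := by field_simp
  have hm1 : (0:ℝ) < (n:ℝ)-1 := by linarith
  rw [h1, inv_div, div_pow, div_le_iff₀ (by positivity)]
  have := pow_ineq n hn
  nlinarith [pow_pos hm1 n]

open scoped Classical in
lemma transfer_bound {X : Type*} [MeasurableSpace X]
    {N : ℕ} {δ : ℝ} (hδ0 : 0 < δ) (hδ1 : δ < 1)
    {F : ((Fin N → X) × (Fin N → X)) → ℝ} (hF : Measurable F)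
    (hsound : ∀ p q : Measure X, IsProbabilityMeasure p → IsProbabilityMeasure q →
      ENNReal.ofReal (1 - δ) ≤
        ((Measure.pi fun _ : Fin N => p).prod (Measure.pi fun _ : Fin N => q))
          {AB | (F AB : EReal) ≤ klDiv p q})
    (p q p' q' : Measure X) [IsProbabilityMeasure p] [IsProbabilityMeasure q]
    [IsProbabilityMeasure p'] [IsProbabilityMeasure q']
    {a b : ℝ} (ha : 0 ≤ a) (hb : 0 ≤ b)
    (hpa : p ≤ ENNReal.ofReal a • p') (hqb : q ≤ ENNReal.ofReal b • q')
    (hkl : klDiv p' q' ≤ ((Real.log N : ℝ) : EReal)) :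
    ((Measure.pi fun _ : Fin N => p).prod (Measure.pi fun _ : Fin N => q))
      {AB | F AB ≤ Real.log N}ᶜ ≤ ENNReal.ofReal (a ^ N * b ^ N * δ) := by
  set S : Set ((Fin N → X) × (Fin N → X)) := {AB | F AB ≤ Real.log N} with hSdef
  have hS : MeasurableSet S := measurableSet_le hF measurable_const
  set μ' : Measure ((Fin N → X) × (Fin N → X)) :=
    (Measure.pi fun _ : Fin N => p').prod (Measure.pi fun _ : Fin N => q') with hμ'def
  haveI : IsProbabilityMeasure μ' := by rw [hμ'def]; infer_instance
  -- step 1: μ' Sᶜ ≤ ofReal δ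
  have hsub : {AB | (F AB : EReal) ≤ klDiv p' q'} ⊆ S := by
    intro x hx
    have : (F x : EReal) ≤ ((Real.log N : ℝ) : EReal) := le_trans hx hkl
    exact EReal.coe_le_coe_iff.mp this
  have h1 : ENNReal.ofReal (1 - δ) ≤ μ' S :=
    le_trans (hsound p' q' inferInstance inferInstance) (measure_mono hsub)
  have hμ'c : μ' Sᶜ ≤ ENNReal.ofReal δ := by
    have hcompl : μ' Sᶜ = 1 - μ' S := prob_compl_eq_one_sub hS
    rw [hcompl]
    have hsum : ENNReal.ofReal δ + ENNReal.ofReal (1 - δ) = 1 := by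
      rw [← ENNReal.ofReal_add hδ0.le (by linarith)]
      norm_num
    calc 1 - μ' S ≤ 1 - ENNReal.ofReal (1 - δ) := tsub_le_tsub_left h1 1
      _ = ENNReal.ofReal δ := by
          rw [← hsum, ENNReal.add_sub_cancel_right ENNReal.ofReal_ne_top]
  -- step 2: domination of product measures
  haveI : IsFiniteMeasure (ENNReal.ofReal a • p') :=
    ⟨by rw [Measure.smul_apply, smul_eq_mul]
        exact ENNReal.mul_lt_top ENNReal.ofReal_lt_top (measure_lt_top _ Set.univ)⟩
  haveI : IsFiniteMeasure (ENNReal.ofReal b • q') :=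
    ⟨by rw [Measure.smul_apply, smul_eq_mul]
        exact ENNReal.mul_lt_top ENNReal.ofReal_lt_top (measure_lt_top _ Set.univ)⟩
  have hdom : (Measure.pi fun _ : Fin N => p).prod (Measure.pi fun _ : Fin N => q) ≤
      ((ENNReal.ofReal a) ^ N * (ENNReal.ofReal b) ^ N) • μ' := by
    have h1' : Measure.pi (fun _ : Fin N => p) ≤
        (ENNReal.ofReal a) ^ N • Measure.pi (fun _ : Fin N => p') := by
      rw [← myPi_smul p' _ ENNReal.ofReal_ne_top]
      exact myPi_mono fun _ => hpa
    have h2' : Measure.pi (fun _ : Fin N => q) ≤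
        (ENNReal.ofReal b) ^ N • Measure.pi (fun _ : Fin N => q') := by
      rw [← myPi_smul q' _ ENNReal.ofReal_ne_top]
      exact myPi_mono fun _ => hqb
    haveI : SFinite ((ENNReal.ofReal b) ^ N • Measure.pi (fun _ : Fin N => q')) := by
      haveI : IsFiniteMeasure ((ENNReal.ofReal b) ^ N • Measure.pi (fun _ : Fin N => q')) :=
        ⟨by rw [Measure.smul_apply, smul_eq_mul]
            exact ENNReal.mul_lt_top (ENNReal.pow_lt_top ENNReal.ofReal_lt_top)
              (measure_lt_top _ Set.univ)⟩
      infer_instance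
    calc (Measure.pi fun _ : Fin N => p).prod (Measure.pi fun _ : Fin N => q)
        ≤ ((ENNReal.ofReal a) ^ N • Measure.pi (fun _ : Fin N => p')).prod
            ((ENNReal.ofReal b) ^ N • Measure.pi (fun _ : Fin N => q')) :=
          myProd_mono h1' h2'
      _ = ((ENNReal.ofReal a) ^ N * (ENNReal.ofReal b) ^ N) • μ' := by
          rw [mySmul_prod_smul _ _ _ _ (ENNReal.pow_ne_top ENNReal.ofReal_ne_top)
            (ENNReal.pow_ne_top ENNReal.ofReal_ne_top)]
  calc ((Measure.pi fun _ : Fin N => p).prod (Measure.pi fun _ : Fin N => q)) Sᶜ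
      ≤ (((ENNReal.ofReal a) ^ N * (ENNReal.ofReal b) ^ N) • μ') Sᶜ :=
        Measure.le_iff'.mp hdom Sᶜ
    _ = (ENNReal.ofReal a) ^ N * (ENNReal.ofReal b) ^ N * μ' Sᶜ := by
        rw [Measure.smul_apply, smul_eq_mul]
    _ ≤ (ENNReal.ofReal a) ^ N * (ENNReal.ofReal b) ^ N * ENNReal.ofReal δ := by
        exact mul_le_mul_right hμ'c _
    _ = ENNReal.ofReal (a ^ N * b ^ N * δ) := by
        rw [← ENNReal.ofReal_pow ha, ← ENNReal.ofReal_pow hb,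
          ← ENNReal.ofReal_mul (pow_nonneg ha N), ← ENNReal.ofReal_mul
          (mul_nonneg (pow_nonneg ha N) (pow_nonneg hb N))]

variable {X : Type*} [MeasurableSpace X]

lemma isFiniteMeasure_ofReal_smul (μ : Measure X) [IsFiniteMeasure μ] (t : ℝ) :
    IsFiniteMeasure (ENNReal.ofReal t • μ) :=
  ⟨by rw [Measure.smul_apply, smul_eq_mul]
      exact ENNReal.mul_lt_top ENNReal.ofReal_lt_top (measure_lt_top _ Set.univ)⟩

lemma mix_prob (μ ν : Measure X) [IsProbabilityMeasure μ] [IsProbabilityMeasure ν]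
    {s t : ℝ} (hs : 0 ≤ s) (ht : 0 ≤ t) (hst : s + t = 1) :
    IsProbabilityMeasure (ENNReal.ofReal s • μ + ENNReal.ofReal t • ν) := by
  constructor
  rw [Measure.add_apply, Measure.smul_apply, Measure.smul_apply, smul_eq_mul, smul_eq_mul,
    measure_univ, measure_univ, mul_one, mul_one, ← ENNReal.ofReal_add hs ht, hst,
    ENNReal.ofReal_one]

lemma le_smul_of_smul_le {κ ρ : Measure X} {t : ℝ} (ht : 0 < t)
    (h : ENNReal.ofReal t • κ ≤ ρ) : κ ≤ ENNReal.ofReal t⁻¹ • ρ := by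
  rw [Measure.le_iff']
  intro s
  rw [Measure.smul_apply, smul_eq_mul]
  have h1 : ENNReal.ofReal t * κ s ≤ ρ s := by
    have := Measure.le_iff'.mp h s
    rwa [Measure.smul_apply, smul_eq_mul] at this
  have h2 : ENNReal.ofReal t⁻¹ * ENNReal.ofReal t = 1 := by
    rw [← ENNReal.ofReal_mul (inv_nonneg.mpr ht.le), inv_mul_cancel₀ ht.ne',
      ENNReal.ofReal_one]
  calc κ s = ENNReal.ofReal t⁻¹ * (ENNReal.ofReal t * κ s) := by
        rw [← mul_assoc, h2, one_mul]
    _ ≤ ENNReal.ofReal t⁻¹ * ρ s := mul_le_mul_right h1 _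

lemma smul_le_mix_left (μ ν : Measure X) (c d : ℝ≥0∞) : c • μ ≤ c • μ + d • ν :=
  Measure.le_iff'.mpr fun s => by
    rw [Measure.add_apply]; exact le_self_add

lemma smul_le_mix_right (μ ν : Measure X) (c d : ℝ≥0∞) : d • ν ≤ c • μ + d • ν :=
  Measure.le_iff'.mpr fun s => by
    rw [Measure.add_apply]; exact le_add_self

lemma ac_of_le_smul {κ ρ : Measure X} {c : ℝ≥0∞} (h : κ ≤ c • ρ) : κ ≪ ρ :=
  (Measure.absolutelyContinuous_of_le h).trans
    (Measure.AbsolutelyContinuous.mk fun s _ h0 => by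
      rw [Measure.smul_apply, h0, smul_eq_mul, mul_zero])

lemma rnDeriv_mix (μ ν κ : Measure X) [IsFiniteMeasure μ] [IsFiniteMeasure ν]
    [IsFiniteMeasure κ] (s t : ℝ) :
    (ENNReal.ofReal s • μ + ENNReal.ofReal t • ν).rnDeriv κ =ᵐ[κ]
      fun x => ENNReal.ofReal s * μ.rnDeriv κ x + ENNReal.ofReal t * ν.rnDeriv κ x := by
  haveI := isFiniteMeasure_ofReal_smul μ s
  haveI := isFiniteMeasure_ofReal_smul ν t
  have h1 := Measure.rnDeriv_add (ENNReal.ofReal s • μ) (ENNReal.ofReal t • ν) κ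
  have h2 := Measure.rnDeriv_smul_left_of_ne_top μ κ (r := ENNReal.ofReal s) ENNReal.ofReal_ne_top
  have h3 := Measure.rnDeriv_smul_left_of_ne_top ν κ (r := ENNReal.ofReal t) ENNReal.ofReal_ne_top
  filter_upwards [h1, h2, h3] with x hx1 hx2 hx3
  rw [hx1, Pi.add_apply, hx2, hx3, Pi.smul_apply, Pi.smul_apply, smul_eq_mul, smul_eq_mul]

end AuxiliaryLemmas

/-- If `F` is a measurable high-confidence (level `1 - δ`) lower bound on the KL divergence
between any two probability measures, evaluated on `N` i.i.d. samples from each, then with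
probability at least `1 - 4δ` it does not exceed `ln N`. -/
theorem highConfidence_klDiv_lowerBound_le_log_sampleSize
    {X : Type*} [MeasurableSpace X] [Nonempty X]
    (N : ℕ) (hN : 1 ≤ N) (δ : ℝ) (hδ0 : 0 < δ) (hδ1 : δ < 1)
    (F : ((Fin N → X) × (Fin N → X)) → ℝ) (hF : Measurable F)
    (hsound : ∀ p q : Measure X, IsProbabilityMeasure p → IsProbabilityMeasure q →
      ENNReal.ofReal (1 - δ) ≤
        ((Measure.pi fun _ : Fin N => p).prod (Measure.pi fun _ : Fin N => q))
          {AB | (F AB : EReal) ≤ klDiv p q}) :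
    ∀ p q : Measure X, IsProbabilityMeasure p → IsProbabilityMeasure q →
      ENNReal.ofReal (1 - 4 * δ) ≤
        ((Measure.pi fun _ : Fin N => p).prod (Measure.pi fun _ : Fin N => q))
          {AB | F AB ≤ Real.log N} := by
  intro p q hp hq
  haveI := hp; haveI := hq
  set S : Set ((Fin N → X) × (Fin N → X)) := {AB | F AB ≤ Real.log N} with hSdef
  have hS : MeasurableSet S := measurableSet_le hF measurable_const
  set μpq : Measure ((Fin N → X) × (Fin N → X)) :=
    (Measure.pi fun _ : Fin N => p).prod (Measure.pi fun _ : Fin N => q) with hμdef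
  haveI : IsProbabilityMeasure μpq := by rw [hμdef]; infer_instance
  have hNr1 : (1:ℝ) ≤ (N:ℝ) := by exact_mod_cast hN
  have hN0 : (0:ℝ) < (N:ℝ) := by linarith
  -- main bound on the complement
  have hcompl : μpq Sᶜ ≤ ENNReal.ofReal (4 * δ) := by
    rcases eq_or_lt_of_le hN with hN1 | hN2
    · -- case N = 1
      obtain rfl : N = 1 := hN1.symm
      set m : Measure X := ENNReal.ofReal (1/2) • p + ENNReal.ofReal (1/2) • q with hm
      haveI : IsProbabilityMeasure m :=
        mix_prob p q (by norm_num) (by norm_num) (by norm_num)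
      have hpa : p ≤ ENNReal.ofReal 2 • m := by
        have := le_smul_of_smul_le (show (0:ℝ) < 1/2 by norm_num)
          (smul_le_mix_left p q (ENNReal.ofReal (1/2)) (ENNReal.ofReal (1/2)))
        rwa [show ((1:ℝ)/2)⁻¹ = 2 by norm_num] at this
      have hqb : q ≤ ENNReal.ofReal 2 • m := by
        have := le_smul_of_smul_le (show (0:ℝ) < 1/2 by norm_num)
          (smul_le_mix_right p q (ENNReal.ofReal (1/2)) (ENNReal.ofReal (1/2)))
        rwa [show ((1:ℝ)/2)⁻¹ = 2 by norm_num] at this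
      have hkl : klDiv m m ≤ ((Real.log ((1:ℕ):ℝ) : ℝ) : EReal) := by
        refine klDiv_le_log_of_bounds Measure.AbsolutelyContinuous.rfl
          (show (0:ℝ) < 1 by norm_num) (by norm_num : (1:ℝ) ≤ ((1:ℕ):ℝ))
          ?_ ?_ <;>
        · filter_upwards [Measure.rnDeriv_self m] with x hx
          simp [hx]
      have := transfer_bound hδ0 hδ1 hF hsound p q m m
        (a := 2) (b := 2) (by norm_num) (by norm_num) hpa hqb hkl
      calc μpq Sᶜ ≤ ENNReal.ofReal (2^1 * 2^1 * δ) := this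
        _ = ENNReal.ofReal (4 * δ) := by norm_num
    · -- case 2 ≤ N
      have hN2' : 2 ≤ N := hN2
      set ε : ℝ := (N:ℝ)⁻¹ with hε
      have hε0 : 0 < ε := by positivity
      have hε1 : ε ≤ 1/2 := by
        rw [hε]
        rw [inv_le_comm₀ hN0 (by norm_num)]
        norm_num
        exact_mod_cast hN2'
      have h1ε : 0 < 1 - ε := by linarith
      set m : Measure X := ENNReal.ofReal ε • p + ENNReal.ofReal (1-ε) • q with hm
      haveI : IsProbabilityMeasure m :=
        mix_prob p q hε0.le (by linarith) (by ring)
      have hpm : p ≤ ENNReal.ofReal ε⁻¹ • m :=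
        le_smul_of_smul_le hε0 (smul_le_mix_left p q _ _)
      have hpm_ac : p ≪ m := ac_of_le_smul hpm
      have hqb : q ≤ ENNReal.ofReal (1-ε)⁻¹ • m :=
        le_smul_of_smul_le h1ε (smul_le_mix_right p q _ _)
      -- a.e. upper bound for the density of p wrt m
      have hrp : ∀ᵐ x ∂m, p.rnDeriv m x ≤ ENNReal.ofReal N := by
        filter_upwards [rnDeriv_mix p q m ε (1-ε), Measure.rnDeriv_self m]
          with x hx1 hx2
        rw [hm] at hx2
        rw [hx2] at hx1
        have hle : ENNReal.ofReal ε * p.rnDeriv m x ≤ 1 := by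
          rw [hx1]; exact le_self_add
        have : p.rnDeriv m x ≤ (ENNReal.ofReal ε)⁻¹ := by
          rw [ENNReal.le_inv_iff_mul_le, mul_comm]
          exact hle
        refine this.trans (le_of_eq ?_)
        rw [hε, ENNReal.ofReal_inv_of_pos hN0, inv_inv]
      -- the key bound for every small η
      have key : ∀ η ∈ Set.Ioo (0:ℝ) 1,
          μpq Sᶜ ≤ ENNReal.ofReal (((1-η)⁻¹)^N * (4 * δ)) := by
        rintro η ⟨hη0, hη1⟩
        have h1η : 0 < 1 - η := by linarith
        set p' : Measure X := ENNReal.ofReal (1-η) • p + ENNReal.ofReal η • m with hp'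
        haveI : IsProbabilityMeasure p' :=
          mix_prob p m (by linarith) hη0.le (by ring)
        have hpa : p ≤ ENNReal.ofReal (1-η)⁻¹ • p' :=
          le_smul_of_smul_le h1η (smul_le_mix_left p m _ _)
        have hp'm_ac : p' ≪ m := by
          refine Measure.AbsolutelyContinuous.mk fun s hs h0 => ?_
          rw [hp', Measure.add_apply, Measure.smul_apply, Measure.smul_apply,
            hpm_ac h0, h0, smul_eq_mul, smul_eq_mul, mul_zero, mul_zero, add_zero]
        have hkl : klDiv p' m ≤ ((Real.log (N:ℝ) : ℝ) : EReal) := by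
          refine klDiv_le_log_of_bounds hp'm_ac hη0 hNr1 ?_ ?_
          · filter_upwards [rnDeriv_mix p m m (1-η) η, Measure.rnDeriv_self m]
              with x hx1 hx2
            rw [hp', hx1, hx2, mul_one]
            exact le_add_self
          · filter_upwards [rnDeriv_mix p m m (1-η) η, Measure.rnDeriv_self m, hrp]
              with x hx1 hx2 hx3
            rw [hp', hx1, hx2, mul_one]
            calc ENNReal.ofReal (1-η) * p.rnDeriv m x + ENNReal.ofReal η
                ≤ ENNReal.ofReal (1-η) * ENNReal.ofReal (N:ℝ) + ENNReal.ofReal η :=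
                  add_le_add_left (mul_le_mul_right hx3 _) _
              _ = ENNReal.ofReal ((1-η) * (N:ℝ) + η) := by
                  rw [← ENNReal.ofReal_mul h1η.le, ← ENNReal.ofReal_add
                    (mul_nonneg h1η.le hN0.le) hη0.le]
              _ ≤ ENNReal.ofReal (N:ℝ) := by
                  refine ENNReal.ofReal_le_ofReal ?_
                  nlinarith
        have htr := transfer_bound hδ0 hδ1 hF hsound p q p' m
          (a := (1-η)⁻¹) (b := (1-ε)⁻¹)
          (by positivity) (by positivity) hpa hqb hkl
        refine htr.trans (ENNReal.ofReal_le_ofReal ?_)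
        have h4 : ((1-ε)⁻¹)^N ≤ 4 := by
          rw [hε]; exact inv_one_sub_inv_pow_le_four hN2'
        have ha0 : (0:ℝ) ≤ ((1-η)⁻¹)^N := by positivity
        calc ((1-η)⁻¹)^N * ((1-ε)⁻¹)^N * δ ≤ ((1-η)⁻¹)^N * 4 * δ := by
              refine mul_le_mul_of_nonneg_right ?_ hδ0.le
              exact mul_le_mul_of_nonneg_left h4 ha0
          _ = ((1-η)⁻¹)^N * (4 * δ) := by ring
      -- take the limit η → 0⁺
      have htend : Filter.Tendsto (fun η : ℝ => ENNReal.ofReal (((1-η)⁻¹)^N * (4 * δ)))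
          (nhdsWithin 0 (Set.Ioi 0)) (nhds (ENNReal.ofReal (4 * δ))) := by
        have hcont : Filter.Tendsto (fun η : ℝ => ((1-η)⁻¹)^N * (4 * δ)) (nhds 0)
            (nhds (4 * δ)) := by
          have : ContinuousAt (fun η : ℝ => ((1-η)⁻¹)^N * (4 * δ)) 0 := by
            have h1 : ContinuousAt (fun η : ℝ => 1 - η) 0 :=
              (continuous_const.sub continuous_id).continuousAt
            have h2 : ContinuousAt (fun η : ℝ => (1-η)⁻¹) 0 :=
              h1.inv₀ (by norm_num)
            exact (h2.pow N).mul continuousAt_const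
          have := this.tendsto
          simpa using this
        exact (ENNReal.continuous_ofReal.tendsto _).comp
          (hcont.mono_left nhdsWithin_le_nhds)
      refine ge_of_tendsto htend ?_
      filter_upwards [Ioo_mem_nhdsGT_of_mem (Set.left_mem_Ico.mpr one_pos)] with η hη
      exact key η hη
  -- conclude
  have h1 : μpq Sᶜ = 1 - μpq S := prob_compl_eq_one_sub hS
  have h2 : (1:ℝ≥0∞) ≤ μpq S + ENNReal.ofReal (4*δ) := by
    rw [h1] at hcompl
    have := tsub_le_iff_right.mp hcompl
    rwa [add_comm] at this
  calc ENNReal.ofReal (1 - 4*δ) = 1 - ENNReal.ofReal (4*δ) := by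
        rw [ENNReal.ofReal_sub _ (by linarith), ENNReal.ofReal_one]
    _ ≤ μpq S := tsub_le_iff_right.mpr h2
end

section
/- Let p and q be probability measures on ℝ with finite second moments, with means μ_p, μ_q and standard deviations σ_p, σ_q. Then for every coupling π of p and q, the quadratic transport cost satisfies ∫ (x−y)² dπ(x,y) ≥ (μ_p − μ_q)² + (σ_p − σ_q)². -/
open MeasureTheory ProbabilityTheory

/-- For probability measures `p`, `q` on `ℝ` with finite second moments, every coupling
`π` of `p` and `q` has quadratic transport cost at least
`(μ_p − μ_q)² + (σ_p − σ_q)²`, where `μ` denotes the mean and `σ` the standard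
deviation. -/
theorem quadratic_cost_ge_mean_std_gap
    (p q : Measure ℝ) [IsProbabilityMeasure p] [IsProbabilityMeasure q]
    (hp : MemLp (fun x : ℝ => x) 2 p) (hq : MemLp (fun x : ℝ => x) 2 q)
    (π : Measure (ℝ × ℝ)) [IsProbabilityMeasure π]
    (hπ₁ : π.fst = p) (hπ₂ : π.snd = q) :
    ((∫ x, x ∂p) - ∫ x, x ∂q) ^ 2 +
        (Real.sqrt (variance (fun x => x) p) - Real.sqrt (variance (fun x => x) q)) ^ 2 ≤
      ∫ z, (z.1 - z.2) ^ 2 ∂π := by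
  set μp := ∫ x, x ∂p with hμp
  set μq := ∫ x, x ∂q with hμq
  have hpf : MeasurePreserving Prod.fst π p := ⟨measurable_fst, hπ₁⟩
  have hqf : MeasurePreserving Prod.snd π q := ⟨measurable_snd, hπ₂⟩
  set F : ℝ × ℝ → ℝ := fun z => z.1 - μp with hFdef
  set G : ℝ × ℝ → ℝ := fun z => z.2 - μq with hGdef
  have hFp : MemLp (fun x : ℝ => x - μp) 2 p := hp.sub (memLp_const μp)
  have hGq : MemLp (fun x : ℝ => x - μq) 2 q := hq.sub (memLp_const μq)
  have hF : MemLp F 2 π := hFp.comp_measurePreserving hpf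
  have hG : MemLp G 2 π := hGq.comp_measurePreserving hqf
  -- transfer integrals along the projections
  have hF2eq : ∫ x, (x - μp) ^ 2 ∂p = ∫ z, (F z) ^ 2 ∂π := by
    rw [← hpf.map_eq, integral_map measurable_fst.aemeasurable
      (hpf.map_eq ▸ hFp.integrable_sq.aestronglyMeasurable)]
  have hG2eq : ∫ x, (x - μq) ^ 2 ∂q = ∫ z, (G z) ^ 2 ∂π := by
    rw [← hqf.map_eq, integral_map measurable_snd.aemeasurable
      (hqf.map_eq ▸ hGq.integrable_sq.aestronglyMeasurable)]
  have hFint0 : ∫ z, F z ∂π = 0 := by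
    have : ∫ z, F z ∂π = ∫ x, (x - μp) ∂p := by
      rw [← hpf.map_eq, integral_map measurable_fst.aemeasurable
        (hpf.map_eq ▸ (hFp.integrable one_le_two).aestronglyMeasurable)]
    rw [this, integral_sub (hp.integrable one_le_two) (integrable_const μp),
      integral_const, probReal_univ, one_smul, ← hμp, sub_self]
  have hGint0 : ∫ z, G z ∂π = 0 := by
    have : ∫ z, G z ∂π = ∫ x, (x - μq) ∂q := by
      rw [← hqf.map_eq, integral_map measurable_snd.aemeasurable
        (hqf.map_eq ▸ (hGq.integrable one_le_two).aestronglyMeasurable)]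
    rw [this, integral_sub (hq.integrable one_le_two) (integrable_const μq),
      integral_const, probReal_univ, one_smul, ← hμq, sub_self]
  -- variance in terms of centered functions
  have hvarp : variance (fun x => x) p = ∫ z, (F z) ^ 2 ∂π := by
    rw [variance_eq_integral hp.aemeasurable, ← hF2eq]
  have hvarq : variance (fun x => x) q = ∫ z, (G z) ^ 2 ∂π := by
    rw [variance_eq_integral hq.aemeasurable, ← hG2eq]
  -- L² elements
  set fL : Lp ℝ 2 π := hF.toLp F with hfL
  set gL : Lp ℝ 2 π := hG.toLp G with hgL
  have hnf : ‖fL‖ ^ 2 = ∫ z, (F z) ^ 2 ∂π := by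
    rw [← real_inner_self_eq_norm_sq, L2.inner_def]
    refine integral_congr_ae ?_
    filter_upwards [hF.coeFn_toLp] with z hz
    simp [hfL, hz, sq]
  have hng : ‖gL‖ ^ 2 = ∫ z, (G z) ^ 2 ∂π := by
    rw [← real_inner_self_eq_norm_sq, L2.inner_def]
    refine integral_congr_ae ?_
    filter_upwards [hG.coeFn_toLp] with z hz
    simp [hgL, hz, sq]
  have hsub : ‖fL - gL‖ ^ 2 = ∫ z, (F z - G z) ^ 2 ∂π := by
    rw [← real_inner_self_eq_norm_sq, L2.inner_def]
    refine integral_congr_ae ?_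
    filter_upwards [hF.coeFn_toLp, hG.coeFn_toLp, Lp.coeFn_sub fL gL] with z h1 h2 h3
    have e1 : (fL : ℝ × ℝ → ℝ) z = F z := h1
    have e2 : (gL : ℝ × ℝ → ℝ) z = G z := h2
    rw [RCLike.inner_apply, h3, Pi.sub_apply, e1, e2]
    simp [sq]
  have hsqrtp : Real.sqrt (variance (fun x => x) p) = ‖fL‖ := by
    rw [hvarp, ← hnf, Real.sqrt_sq (norm_nonneg _)]
  have hsqrtq : Real.sqrt (variance (fun x => x) q) = ‖gL‖ := by
    rw [hvarq, ← hng, Real.sqrt_sq (norm_nonneg _)]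
  -- expand the cost
  set c := μp - μq with hc
  have hFGint : Integrable (fun z => F z - G z) π :=
    ((hF.sub hG).integrable one_le_two)
  have hFGsq : Integrable (fun z => (F z - G z) ^ 2) π := (hF.sub hG).integrable_sq
  have expand : ∫ z, (z.1 - z.2) ^ 2 ∂π
      = ∫ z, (F z - G z) ^ 2 ∂π + c ^ 2 := by
    have : ∀ z : ℝ × ℝ, (z.1 - z.2) ^ 2
        = (F z - G z) ^ 2 + (2 * c) * (F z - G z) + c ^ 2 := by
      intro z; simp only [hFdef, hGdef, hc]; ring
    rw [integral_congr_ae (Filter.Eventually.of_forall this)]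
    have hA : Integrable (fun z => (F z - G z) ^ 2 + 2 * c * (F z - G z)) π :=
      hFGsq.add (hFGint.const_mul (2 * c))
    have hB : Integrable (fun z => 2 * c * (F z - G z)) π := hFGint.const_mul (2 * c)
    rw [integral_add hA (integrable_const _),
      integral_add hFGsq hB, integral_const_mul,
      integral_sub (hF.integrable one_le_two) (hG.integrable one_le_two),
      hFint0, hGint0, integral_const, probReal_univ, one_smul]
    ring
  -- the key inequality via the triangle inequality in L²
  have hkey : (‖fL‖ - ‖gL‖) ^ 2 ≤ ‖fL - gL‖ ^ 2 := by
    have h1 : |‖fL‖ - ‖gL‖| ≤ ‖fL - gL‖ := abs_norm_sub_norm_le fL gL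
    calc (‖fL‖ - ‖gL‖) ^ 2 = |‖fL‖ - ‖gL‖| ^ 2 := (sq_abs _).symm
      _ ≤ ‖fL - gL‖ ^ 2 := by
        exact pow_le_pow_left₀ (abs_nonneg _) h1 2
  rw [expand, hsqrtp, hsqrtq, ← hsub]
  linarith [hkey]
end

section
/- Let μ₁, μ₂ ∈ ℝ and σ₁, σ₂ ≥ 0. Then the pushforward π of the standard Gaussian measure on ℝ under the map z ↦ (μ₁ + σ₁ z, μ₂ + σ₂ z) is a coupling of the Gaussian measures N(μ₁, σ₁²) and N(μ₂, σ₂²), and its quadratic cost is ∫ (x−y)² dπ(x,y) = (μ₁ − μ₂)² + (σ₁ − σ₂)². Consequently, the squared 2-Wasserstein distance, i.e., the infimum over all couplings π of N(μ₁, σ₁²) and N(μ₂, σ₂²) of ∫ (x−y)² dπ, equals (μ₁ − μ₂)² + (σ₁ − σ₂)², and the infimum is attained. -/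
open MeasureTheory ProbabilityTheory

section Aux
open Real Filter

lemma lim_top : Tendsto (fun x : ℝ => x * rexp (-(1/2) * x^2)) atTop (nhds 0) := by
  have h := rpow_mul_exp_neg_mul_sq_isLittleO_exp_neg (by norm_num : (0:ℝ) < 1/2) 1
  have h2 : Tendsto (fun x:ℝ => rexp (-(1/2) * x)) atTop (nhds 0) :=
    Real.tendsto_exp_atBot.comp (Tendsto.const_mul_atTop_of_neg (by norm_num) tendsto_id)
  have := h.isBigO.trans_tendsto h2
  refine this.congr' ?_
  filter_upwards [eventually_ge_atTop (0:ℝ)] with x hx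
  rw [Real.rpow_one]

lemma int_sq_exp : Integrable (fun x : ℝ => x^2 * rexp (-(1/2) * x^2)) := by
  have := integrable_rpow_mul_exp_neg_mul_sq (by norm_num : (0:ℝ) < 1/2) (s := 2) (by norm_num)
  simpa [Real.rpow_natCast] using this

lemma deriv_aux (x : ℝ) : HasDerivAt (fun x : ℝ => -x * rexp (-(1/2) * x^2))
    ((x^2 - 1) * rexp (-(1/2) * x^2)) x := by
  have hu : HasDerivAt (fun x : ℝ => -(1/2) * x^2) (-x) x := by
    have := (hasDerivAt_pow 2 x).const_mul (-(1/2) : ℝ)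
    simpa using this.congr_deriv (by ring)
  have hE := hu.exp
  have := ((hasDerivAt_id x).neg).mul hE
  refine this.congr_deriv ?_
  simp only [Pi.neg_apply, id]
  ring

lemma exp_int : Integrable (fun x : ℝ => rexp (-(1/2) * x^2)) :=
  integrable_exp_neg_mul_sq (by norm_num)

lemma integral_sq_exp : ∫ x : ℝ, x^2 * rexp (-(1/2) * x^2) = Real.sqrt (2 * π) := by
  have hlim' : Tendsto (fun x : ℝ => -x * rexp (-(1/2) * x^2)) atTop (nhds 0) := by
    simpa using lim_top.neg
  have hbot : Tendsto (fun x : ℝ => -x * rexp (-(1/2) * x^2)) atBot (nhds 0) := by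
    have := lim_top.comp tendsto_neg_atBot_atTop
    have h2 : ((fun x : ℝ => x * rexp (-(1/2) * x^2)) ∘ Neg.neg)
        = fun x : ℝ => -x * rexp (-(1/2) * x^2) := by
      ext x; simp only [Function.comp]; ring_nf
    rwa [h2] at this
  have key := integral_of_hasDerivAt_of_tendsto deriv_aux
    ((int_sq_exp.sub exp_int).congr (ae_of_all _ fun x => by simp only [Pi.sub_apply]; ring)) hbot hlim'
  have : ∫ x : ℝ, (x^2 - 1) * rexp (-(1/2) * x^2) = 0 := by simpa using key
  have hsplit : ∫ x : ℝ, (x^2 - 1) * rexp (-(1/2) * x^2)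
      = (∫ x : ℝ, x^2 * rexp (-(1/2) * x^2)) - ∫ x : ℝ, rexp (-(1/2) * x^2) := by
    rw [← integral_sub int_sq_exp exp_int]
    congr 1; ext x; ring
  have hg : ∫ x : ℝ, rexp (-(1/2) * x^2) = Real.sqrt (2 * π) := by
    have := integral_gaussian (1/2)
    rw [this]; congr 1; rw [div_div_eq_mul_div, div_one]; ring
  rw [hsplit, hg] at this
  linarith

noncomputable def stdP : ℝ → ℝ := gaussianPDFReal 0 1

lemma stdP_nonneg (x : ℝ) : 0 ≤ stdP x := gaussianPDFReal_nonneg 0 1 x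

lemma stdP_meas : Measurable stdP := measurable_gaussianPDFReal 0 1

lemma gauss_eq_wd : gaussianReal 0 1 =
    volume.withDensity (fun x => ((stdP x).toNNReal : ENNReal)) := by
  rw [gaussianReal_of_var_ne_zero 0 one_ne_zero]
  rfl

lemma gauss_integral (g : ℝ → ℝ) :
    ∫ x, g x ∂(gaussianReal 0 1) = ∫ x, stdP x * g x := by
  rw [gauss_eq_wd, integral_withDensity_eq_integral_smul (stdP_meas.real_toNNReal) g]
  congr 1; ext x
  show ((stdP x).toNNReal : ℝ) • g x = _
  rw [smul_eq_mul, Real.coe_toNNReal _ (stdP_nonneg x)]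

lemma gauss_integrable (g : ℝ → ℝ) (hg : AEStronglyMeasurable g volume)
    (h : Integrable (fun x => stdP x * g x)) : Integrable g (gaussianReal 0 1) := by
  rw [gauss_eq_wd, integrable_withDensity_iff_integrable_smul (stdP_meas.real_toNNReal)]
  refine h.congr (ae_of_all _ fun x => ?_)
  show stdP x * g x = ((stdP x).toNNReal : ℝ) • g x
  rw [smul_eq_mul, Real.coe_toNNReal _ (stdP_nonneg x)]

lemma stdP_eq (x : ℝ) : stdP x = (Real.sqrt (2*π))⁻¹ * rexp (-(1/2) * x^2) := by
  show gaussianPDFReal 0 1 x = _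
  rw [gaussianPDFReal]
  norm_num
  ring_nf
  exact Or.inl trivial

lemma integral_odd_pdf : ∫ x : ℝ, stdP x * x = 0 := by
  have A : MeasurableEmbedding fun x : ℝ => -x :=
    (Homeomorph.neg ℝ).isClosedEmbedding.measurableEmbedding
  have h1 : ∫ x : ℝ, stdP (-x) * (-x) = ∫ x : ℝ, stdP x * x := by
    have := A.integral_map (μ := volume) (g := fun x : ℝ => stdP x * x)
    rw [Measure.map_neg_eq_self (volume : Measure ℝ)] at this
    exact this.symm
  have h2 : ∀ x : ℝ, stdP (-x) * (-x) = -(stdP x * x) := by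
    intro x
    rw [stdP_eq, stdP_eq]
    ring_nf
  simp_rw [h2] at h1
  rw [integral_neg] at h1
  linarith

lemma gauss_E_id : ∫ x, x ∂(gaussianReal 0 1) = 0 := by
  rw [gauss_integral]; exact integral_odd_pdf

lemma gauss_E_sq : ∫ x, x^2 ∂(gaussianReal 0 1) = 1 := by
  rw [gauss_integral]
  have : ∀ x : ℝ, stdP x * x^2 = (Real.sqrt (2*π))⁻¹ * (x^2 * rexp (-(1/2) * x^2)) := by
    intro x; rw [stdP_eq]; ring
  simp_rw [this]
  rw [integral_const_mul, integral_sq_exp, inv_mul_cancel₀]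
  positivity

lemma gauss_int_id : Integrable (fun x : ℝ => x) (gaussianReal 0 1) := by
  refine gauss_integrable _ aestronglyMeasurable_id ?_
  have : Integrable (fun x : ℝ => (Real.sqrt (2*π))⁻¹ * (x * rexp (-(1/2) * x^2))) :=
    (integrable_mul_exp_neg_mul_sq (by norm_num : (0:ℝ) < 1/2)).const_mul _
  refine this.congr (ae_of_all _ fun x => ?_)
  simp only [stdP_eq]; ring

lemma gauss_int_sq : Integrable (fun x : ℝ => x^2) (gaussianReal 0 1) := by
  refine gauss_integrable _ (by fun_prop) ?_
  have : Integrable (fun x : ℝ => (Real.sqrt (2*π))⁻¹ * (x^2 * rexp (-(1/2) * x^2))) :=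
    int_sq_exp.const_mul _
  refine this.congr (ae_of_all _ fun x => ?_)
  simp only [stdP_eq]; ring

lemma map_affine (μ σ : ℝ) (hσ : 0 ≤ σ) :
    Measure.map (fun z => μ + σ * z) (gaussianReal 0 1) = gaussianReal μ (σ^2).toNNReal := by
  have hcomp : (fun z : ℝ => μ + σ * z) = (fun y => y + μ) ∘ (fun z => σ * z) := by
    ext z; simp [Function.comp, add_comm]
  rw [hcomp, ← Measure.map_map (measurable_add_const μ) (measurable_const_mul σ),
    gaussianReal_map_const_mul, gaussianReal_map_add_const]
  congr 1
  · ring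
  · ext
    simp [Real.coe_toNNReal _ (sq_nonneg σ)]

lemma gauss_int_affine (μ σ : ℝ) : Integrable (fun z : ℝ => μ + σ * z) (gaussianReal 0 1) :=
  (integrable_const μ).add (gauss_int_id.const_mul σ)

lemma nE_id (μ σ : ℝ) (hσ : 0 ≤ σ) : ∫ x, x ∂(gaussianReal μ (σ^2).toNNReal) = μ := by
  rw [← map_affine μ σ hσ,
    integral_map (φ := fun z : ℝ => μ + σ * z) (f := fun x : ℝ => x) (by fun_prop)
      measurable_id'.aestronglyMeasurable]
  rw [integral_add (integrable_const μ) (gauss_int_id.const_mul σ), integral_const,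
    integral_const_mul, gauss_E_id]
  simp

lemma nint_id (μ σ : ℝ) (hσ : 0 ≤ σ) :
    Integrable (fun x => x) (gaussianReal μ (σ^2).toNNReal) := by
  rw [← map_affine μ σ hσ, integrable_map_measure measurable_id'.aestronglyMeasurable (by fun_prop)]
  exact gauss_int_affine μ σ

lemma nE_sq (μ σ : ℝ) (hσ : 0 ≤ σ) :
    ∫ x, (x - μ)^2 ∂(gaussianReal μ (σ^2).toNNReal) = σ^2 := by
  rw [← map_affine μ σ hσ, integral_map (by fun_prop)
    ((measurable_id'.sub_const μ).pow_const 2).aestronglyMeasurable]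
  have : ∀ z : ℝ, (μ + σ * z - μ)^2 = σ^2 * z^2 := fun z => by ring
  simp_rw [this]
  rw [integral_const_mul, gauss_E_sq, mul_one]

lemma nint_sq (μ σ : ℝ) (hσ : 0 ≤ σ) :
    Integrable (fun x => (x - μ)^2) (gaussianReal μ (σ^2).toNNReal) := by
  rw [← map_affine μ σ hσ, integrable_map_measure
    ((measurable_id'.sub_const μ).pow_const 2).aestronglyMeasurable (by fun_prop)]
  have : Integrable (fun z : ℝ => σ^2 * z^2) (gaussianReal 0 1) := gauss_int_sq.const_mul _
  refine this.congr (ae_of_all _ fun z => ?_)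
  simp only [Function.comp]; ring

lemma gauss_integral_quad (a b c : ℝ) :
    ∫ x, (a + (b * x + c * x ^ 2)) ∂(gaussianReal 0 1) = a + c := by
  have e : (fun x : ℝ => a + (b * x + c * x ^ 2))
      = (fun _ : ℝ => a) + ((fun x : ℝ => b * x) + fun x : ℝ => c * x ^ 2) := rfl
  show ∫ x, (a + (b * x + c * x ^ 2)) ∂(gaussianReal 0 1) = a + c
  rw [show (∫ x, (a + (b * x + c * x ^ 2)) ∂(gaussianReal 0 1))
      = ∫ x, ((fun _ : ℝ => a) + ((fun x : ℝ => b * x) + fun x : ℝ => c * x ^ 2)) x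
        ∂(gaussianReal 0 1) from rfl,
    integral_add' (integrable_const a) ((gauss_int_id.const_mul b).add (gauss_int_sq.const_mul c)),
    integral_add' (gauss_int_id.const_mul b) (gauss_int_sq.const_mul c)]
  simp only [integral_const, integral_const_mul, gauss_E_id, gauss_E_sq, measure_univ, probReal_univ,
    ENNReal.toReal_one, smul_eq_mul, one_mul, mul_zero, mul_one, add_zero, zero_add]
  rw [integral_const_mul, gauss_E_id]
  ring

end Aux

/-- The pushforward `π` of the standard Gaussian under `z ↦ (μ₁ + σ₁ z, μ₂ + σ₂ z)` is a
coupling of `N(μ₁, σ₁²)` and `N(μ₂, σ₂²)` with quadratic cost exactly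
`(μ₁ − μ₂)² + (σ₁ − σ₂)²`; consequently the squared 2-Wasserstein distance between the two
Gaussians (the infimum of the quadratic cost over all couplings) equals
`(μ₁ − μ₂)² + (σ₁ − σ₂)²` and the infimum is attained. -/
theorem gaussian_W2sq_eq
    (μ₁ μ₂ σ₁ σ₂ : ℝ) (hσ₁ : 0 ≤ σ₁) (hσ₂ : 0 ≤ σ₂) :
    (Measure.map (fun z => (μ₁ + σ₁ * z, μ₂ + σ₂ * z)) (gaussianReal 0 1)).fst =
        gaussianReal μ₁ (σ₁ ^ 2).toNNReal ∧
    (Measure.map (fun z => (μ₁ + σ₁ * z, μ₂ + σ₂ * z)) (gaussianReal 0 1)).snd =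
        gaussianReal μ₂ (σ₂ ^ 2).toNNReal ∧
    (∫ z, (z.1 - z.2) ^ 2 ∂(Measure.map (fun z => (μ₁ + σ₁ * z, μ₂ + σ₂ * z))
        (gaussianReal 0 1))) = (μ₁ - μ₂) ^ 2 + (σ₁ - σ₂) ^ 2 ∧
    IsLeast {c : ℝ | ∃ π : Measure (ℝ × ℝ), IsProbabilityMeasure π ∧
          π.fst = gaussianReal μ₁ (σ₁ ^ 2).toNNReal ∧
          π.snd = gaussianReal μ₂ (σ₂ ^ 2).toNNReal ∧
          c = ∫ z, (z.1 - z.2) ^ 2 ∂π}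
        ((μ₁ - μ₂) ^ 2 + (σ₁ - σ₂) ^ 2) := by
  set f : ℝ → ℝ × ℝ := fun z => (μ₁ + σ₁ * z, μ₂ + σ₂ * z) with hf
  have hfm : Measurable f := by fun_prop
  have h1 : (Measure.map f (gaussianReal 0 1)).fst = gaussianReal μ₁ (σ₁ ^ 2).toNNReal := by
    rw [Measure.fst, Measure.map_map measurable_fst hfm]
    exact map_affine μ₁ σ₁ hσ₁
  have h2 : (Measure.map f (gaussianReal 0 1)).snd = gaussianReal μ₂ (σ₂ ^ 2).toNNReal := by
    rw [Measure.snd, Measure.map_map measurable_snd hfm]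
    exact map_affine μ₂ σ₂ hσ₂
  have h3 : (∫ z, (z.1 - z.2) ^ 2 ∂(Measure.map f (gaussianReal 0 1)))
      = (μ₁ - μ₂) ^ 2 + (σ₁ - σ₂) ^ 2 := by
    rw [integral_map (f := fun z : ℝ × ℝ => (z.1 - z.2) ^ 2) hfm.aemeasurable
      ((measurable_fst.sub measurable_snd).pow_const 2).aestronglyMeasurable]
    have expand : ∀ z : ℝ, ((f z).1 - (f z).2) ^ 2
        = (μ₁ - μ₂) ^ 2 + ((2 * (μ₁ - μ₂) * (σ₁ - σ₂)) * z + (σ₁ - σ₂) ^ 2 * z ^ 2) := by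
      intro z; simp only [hf]; ring
    simp_rw [expand]
    exact gauss_integral_quad _ _ _
  refine ⟨h1, h2, h3, ⟨⟨Measure.map f (gaussianReal 0 1), ?_, h1, h2, h3.symm⟩, ?_⟩⟩
  · exact Measure.isProbabilityMeasure_map hfm.aemeasurable
  rintro c ⟨p, hp, hp1, hp2, rfl⟩
  have hX2 : Integrable (fun z : ℝ × ℝ => (z.1 - μ₁) ^ 2) p := by
    have := nint_sq μ₁ σ₁ hσ₁
    rw [← hp1, Measure.fst, integrable_map_measure
      ((measurable_id'.sub_const μ₁).pow_const 2).aestronglyMeasurable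
      measurable_fst.aemeasurable] at this
    exact this
  have hY2 : Integrable (fun z : ℝ × ℝ => (z.2 - μ₂) ^ 2) p := by
    have := nint_sq μ₂ σ₂ hσ₂
    rw [← hp2, Measure.snd, integrable_map_measure
      ((measurable_id'.sub_const μ₂).pow_const 2).aestronglyMeasurable
      measurable_snd.aemeasurable] at this
    exact this
  have hX1 : Integrable (fun z : ℝ × ℝ => z.1) p := by
    have := nint_id μ₁ σ₁ hσ₁
    rw [← hp1, Measure.fst, integrable_map_measure
      measurable_id'.aestronglyMeasurable measurable_fst.aemeasurable] at this
    exact this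
  have hY1 : Integrable (fun z : ℝ × ℝ => z.2) p := by
    have := nint_id μ₂ σ₂ hσ₂
    rw [← hp2, Measure.snd, integrable_map_measure
      measurable_id'.aestronglyMeasurable measurable_snd.aemeasurable] at this
    exact this
  have EX1 : ∫ z, (z : ℝ × ℝ).1 ∂p = μ₁ := by
    have := nE_id μ₁ σ₁ hσ₁
    rwa [← hp1, Measure.fst, integral_map measurable_fst.aemeasurable
      measurable_id'.aestronglyMeasurable] at this
  have EY1 : ∫ z, (z : ℝ × ℝ).2 ∂p = μ₂ := by
    have := nE_id μ₂ σ₂ hσ₂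
    rwa [← hp2, Measure.snd, integral_map measurable_snd.aemeasurable
      measurable_id'.aestronglyMeasurable] at this
  have EX2 : ∫ z, ((z : ℝ × ℝ).1 - μ₁) ^ 2 ∂p = σ₁ ^ 2 := by
    have := nE_sq μ₁ σ₁ hσ₁
    rwa [← hp1, Measure.fst, integral_map measurable_fst.aemeasurable
      ((measurable_id'.sub_const μ₁).pow_const 2).aestronglyMeasurable] at this
  have EY2 : ∫ z, ((z : ℝ × ℝ).2 - μ₂) ^ 2 ∂p = σ₂ ^ 2 := by
    have := nE_sq μ₂ σ₂ hσ₂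
    rwa [← hp2, Measure.snd, integral_map measurable_snd.aemeasurable
      ((measurable_id'.sub_const μ₂).pow_const 2).aestronglyMeasurable] at this
  have hXY : Integrable (fun z : ℝ × ℝ => (z.1 - μ₁) * (z.2 - μ₂)) p := by
    refine Integrable.mono ((hX2.add hY2).div_const 2)
      (((measurable_fst.sub_const μ₁).mul (measurable_snd.sub_const μ₂)).aestronglyMeasurable)
      (ae_of_all _ fun z => ?_)
    simp only [Real.norm_eq_abs, Pi.div_apply, Pi.add_apply]
    rw [abs_mul, abs_of_nonneg (by positivity : (0:ℝ) ≤ ((z.1 - μ₁) ^ 2 + (z.2 - μ₂) ^ 2) / 2)]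
    nlinarith [sq_nonneg (|z.1 - μ₁| - |z.2 - μ₂|), sq_abs (z.1 - μ₁), sq_abs (z.2 - μ₂)]
  have hcross : ∫ z, ((z : ℝ × ℝ).1 - μ₁) * (z.2 - μ₂) ∂p ≤ σ₁ * σ₂ := by
    rcases eq_or_lt_of_le hσ₁ with h₁ | h₁
    · have hzero : ∀ᵐ z ∂p, (z : ℝ × ℝ).1 = μ₁ := by
        have hfst : p.fst = Measure.dirac μ₁ := by
          rw [hp1, ← h₁]
          rw [show ((0:ℝ) ^ 2).toNNReal = 0 by simp]
          exact gaussianReal_zero_var μ₁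
        have hev : p (Prod.fst ⁻¹' ({μ₁}ᶜ : Set ℝ)) = 0 := by
          rw [← Measure.fst_apply (measurableSet_singleton μ₁).compl, hfst,
            Measure.dirac_apply' _ (measurableSet_singleton μ₁).compl]
          simp
        rw [ae_iff]
        convert hev using 2
        rfl
      have hzero' : ∫ z, ((z : ℝ × ℝ).1 - μ₁) * (z.2 - μ₂) ∂p = 0 := by
        have : ∫ z, ((z : ℝ × ℝ).1 - μ₁) * (z.2 - μ₂) ∂p = ∫ _, (0:ℝ) ∂p :=
          integral_congr_ae (by filter_upwards [hzero] with z hz; rw [hz]; ring)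
        simpa using this
      rw [hzero', ← h₁, zero_mul]
    · rcases eq_or_lt_of_le hσ₂ with h₂ | h₂
      · have hzero : ∀ᵐ z ∂p, (z : ℝ × ℝ).2 = μ₂ := by
          have hfst : p.snd = Measure.dirac μ₂ := by
            rw [hp2, ← h₂]
            rw [show ((0:ℝ) ^ 2).toNNReal = 0 by simp]
            exact gaussianReal_zero_var μ₂
          have hev : p (Prod.snd ⁻¹' ({μ₂}ᶜ : Set ℝ)) = 0 := by
            rw [← Measure.snd_apply (measurableSet_singleton μ₂).compl, hfst,
              Measure.dirac_apply' _ (measurableSet_singleton μ₂).compl]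
            simp
          rw [ae_iff]
          convert hev using 2
          rfl
        have hzero' : ∫ z, ((z : ℝ × ℝ).1 - μ₁) * (z.2 - μ₂) ∂p = 0 := by
          have : ∫ z, ((z : ℝ × ℝ).1 - μ₁) * (z.2 - μ₂) ∂p = ∫ _, (0:ℝ) ∂p :=
            integral_congr_ae (by filter_upwards [hzero] with z hz; rw [hz]; ring)
          simpa using this
        rw [hzero', ← h₂, mul_zero]
      · have hnn : 0 ≤ ∫ z, (σ₂ * ((z : ℝ × ℝ).1 - μ₁) - σ₁ * (z.2 - μ₂)) ^ 2 ∂p :=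
          integral_nonneg fun z => sq_nonneg _
        have hexp : ∫ z, (σ₂ * ((z : ℝ × ℝ).1 - μ₁) - σ₁ * (z.2 - μ₂)) ^ 2 ∂p
            = σ₂ ^ 2 * σ₁ ^ 2 + σ₁ ^ 2 * σ₂ ^ 2
              - 2 * σ₁ * σ₂ * ∫ z, ((z : ℝ × ℝ).1 - μ₁) * (z.2 - μ₂) ∂p := by
          have expand : (fun z : ℝ × ℝ => (σ₂ * (z.1 - μ₁) - σ₁ * (z.2 - μ₂)) ^ 2)
              = ((fun z : ℝ × ℝ => σ₂ ^ 2 * (z.1 - μ₁) ^ 2)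
                  + fun z : ℝ × ℝ => σ₁ ^ 2 * (z.2 - μ₂) ^ 2)
                - fun z : ℝ × ℝ => (2 * σ₁ * σ₂) * ((z.1 - μ₁) * (z.2 - μ₂)) := by
            funext z
            simp only [Pi.sub_apply, Pi.add_apply]
            ring
          rw [show (∫ z, (σ₂ * ((z : ℝ × ℝ).1 - μ₁) - σ₁ * (z.2 - μ₂)) ^ 2 ∂p)
              = ∫ z, ((fun z : ℝ × ℝ => (σ₂ * (z.1 - μ₁) - σ₁ * (z.2 - μ₂)) ^ 2)) z ∂p from rfl,
            expand,
            integral_sub' ((hX2.const_mul _).add (hY2.const_mul _)) (hXY.const_mul _),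
            integral_add' (hX2.const_mul _) (hY2.const_mul _)]
          simp only [integral_const_mul, EX2, EY2]
        rw [hexp] at hnn
        have h12 : 0 < σ₁ * σ₂ := mul_pos h₁ h₂
        nlinarith
  have hXc : Integrable (fun z : ℝ × ℝ => z.1 - μ₁) p := hX1.sub (integrable_const μ₁)
  have hYc : Integrable (fun z : ℝ × ℝ => z.2 - μ₂) p := hY1.sub (integrable_const μ₂)
  have EXc : ∫ z, ((z : ℝ × ℝ).1 - μ₁) ∂p = 0 := by
    rw [integral_sub hX1 (integrable_const μ₁), EX1, integral_const]
    simp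
  have EYc : ∫ z, ((z : ℝ × ℝ).2 - μ₂) ∂p = 0 := by
    rw [integral_sub hY1 (integrable_const μ₂), EY1, integral_const]
    simp
  have hmain : ∫ z, ((z : ℝ × ℝ).1 - z.2) ^ 2 ∂p
      = (μ₁ - μ₂) ^ 2 + σ₁ ^ 2 + σ₂ ^ 2
        - 2 * ∫ z, ((z : ℝ × ℝ).1 - μ₁) * (z.2 - μ₂) ∂p := by
    have expand : (fun z : ℝ × ℝ => (z.1 - z.2) ^ 2)
        = ((fun _ : ℝ × ℝ => (μ₁ - μ₂) ^ 2)
            + ((fun z : ℝ × ℝ => (z.1 - μ₁) ^ 2)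
            + ((fun z : ℝ × ℝ => (z.2 - μ₂) ^ 2)
            + ((fun z : ℝ × ℝ => (2 * (μ₁ - μ₂)) * (z.1 - μ₁))
            + fun z : ℝ × ℝ => (-(2 * (μ₁ - μ₂))) * (z.2 - μ₂)))))
          - fun z : ℝ × ℝ => 2 * ((z.1 - μ₁) * (z.2 - μ₂)) := by
      funext z
      simp only [Pi.sub_apply, Pi.add_apply]
      ring
    rw [show (∫ z, ((z : ℝ × ℝ).1 - z.2) ^ 2 ∂p)
        = ∫ z, (fun z : ℝ × ℝ => (z.1 - z.2) ^ 2) z ∂p from rfl, expand,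
      integral_sub' ((integrable_const _).add (hX2.add (hY2.add
        ((hXc.const_mul _).add (hYc.const_mul _))))) (hXY.const_mul 2),
      integral_add' (integrable_const _) (hX2.add (hY2.add
        ((hXc.const_mul _).add (hYc.const_mul _)))),
      integral_add' hX2 (hY2.add ((hXc.const_mul _).add (hYc.const_mul _))),
      integral_add' hY2 ((hXc.const_mul _).add (hYc.const_mul _)),
      integral_add' (hXc.const_mul _) (hYc.const_mul _)]
    simp only [integral_const_mul, integral_const, EX2, EY2, EXc, EYc, measure_univ, probReal_univ,
      ENNReal.toReal_one, smul_eq_mul, one_mul, mul_zero, add_zero]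
    ring
  rw [hmain]
  nlinarith [hcross]
end

section
/- Let d ≥ 1, let μ₁, μ₂ ∈ ℝ^d and let σ₁, σ₂ ∈ ℝ^d have nonnegative entries. Let p = ⊗_{i=1}^d N(μ₁ᵢ, σ₁ᵢ²) and q = ⊗_{i=1}^d N(μ₂ᵢ, σ₂ᵢ²) be the corresponding Gaussian product measures on ℝ^d (i.e., Gaussians with diagonal covariance). Then for every coupling π of p and q, ∫ ‖x − y‖₂² dπ(x,y) ≥ ‖μ₁ − μ₂‖₂² + Σ_{i=1}^d (σ₁ᵢ − σ₂ᵢ)². -/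
open MeasureTheory ProbabilityTheory

section AuxGaussianMoments

open Real
open scoped NNReal ENNReal

lemma pdf_form (μ : ℝ) (v : ℝ≥0) (hv : v ≠ 0) (x : ℝ) :
    gaussianPDFReal μ v x = (√(2 * π * v))⁻¹ * rexp (-(2 * (v:ℝ))⁻¹ * (x - μ)^2) := by
  have hv' : (0:ℝ) < v := by
    have := hv; positivity
  rw [gaussianPDFReal]
  congr 1
  field_simp

lemma integral_gaussianReal_eq (μ : ℝ) (v : ℝ≥0) (hv : v ≠ 0) (g : ℝ → ℝ) :
    ∫ x, g x ∂(gaussianReal μ v) = ∫ x, gaussianPDFReal μ v x * g x := by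
  rw [gaussianReal_of_var_ne_zero _ hv]
  have hmeas : Measurable fun x => (gaussianPDFReal μ v x).toNNReal :=
    (measurable_gaussianPDFReal μ v).real_toNNReal
  have h : (gaussianPDF μ v) = fun x => ((gaussianPDFReal μ v x).toNNReal : ENNReal) := rfl
  rw [h, integral_withDensity_eq_integral_smul hmeas g]
  congr 1 with x
  simp [NNReal.smul_def, Real.coe_toNNReal _ (gaussianPDFReal_nonneg μ v x)]

lemma integrable_gaussianReal_iff (μ : ℝ) (v : ℝ≥0) (hv : v ≠ 0) (g : ℝ → ℝ) :
    Integrable g (gaussianReal μ v) ↔ Integrable (fun x => gaussianPDFReal μ v x * g x) := by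
  rw [gaussianReal_of_var_ne_zero _ hv]
  have hmeas : Measurable fun x => (gaussianPDFReal μ v x).toNNReal :=
    (measurable_gaussianPDFReal μ v).real_toNNReal
  have h : (gaussianPDF μ v) = fun x => ((gaussianPDFReal μ v x).toNNReal : ENNReal) := rfl
  rw [h, integrable_withDensity_iff_integrable_smul hmeas]
  constructor <;> intro h' <;> refine h'.congr (Filter.Eventually.of_forall fun x => ?_) <;>
    simp [NNReal.smul_def, Real.coe_toNNReal _ (gaussianPDFReal_nonneg μ v x)]

lemma odd_int (b : ℝ) : ∫ x : ℝ, x * rexp (-b * x^2) = 0 := by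
  have h := MeasureTheory.integral_neg_eq_self (fun x : ℝ => x * rexp (-b * x^2)) volume
  simp only [neg_mul, neg_sq] at h
  have h2 : ∫ x : ℝ, -(x * rexp (-(b * x^2))) = - ∫ x : ℝ, x * rexp (-(b * x^2)) :=
    integral_neg _
  rw [h2] at h
  simp only [neg_mul]
  linarith [h]

lemma sq_int (b : ℝ) (hb : 0 < b) :
    ∫ x : ℝ, x^2 * rexp (-b * x^2) = b ^ (-(3:ℝ)/2) * Real.Gamma (3/2) := by
  have hrpow : ∀ x : ℝ, x ^ ((2:ℕ):ℝ) = x ^ (2:ℕ) := fun x => Real.rpow_natCast x 2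
  have habs : ∫ x : ℝ, x^2 * rexp (-b * x^2) = 2 * ∫ x in Set.Ioi (0:ℝ), x^2 * rexp (-b * x^2) := by
    rw [← integral_comp_abs (f := fun x => x^2 * rexp (-b * x^2))]
    congr 1 with x
    simp [sq_abs]
  rw [habs]
  have h := integral_rpow_mul_exp_neg_mul_rpow (p := 2) (q := 2) two_pos (by norm_num) hb
  simp only [show ((2:ℝ)) = ((2:ℕ):ℝ) by norm_num, hrpow] at h
  rw [h]
  norm_num
  ring

lemma gamma_32 : Real.Gamma (3/2) = √π / 2 := by
  have : (3/2 : ℝ) = 1/2 + 1 := by norm_num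
  rw [this, Real.Gamma_add_one (by norm_num), Real.Gamma_one_half_eq]
  ring

lemma integrable_dirac'' {f : ℝ → ℝ} (hf : Measurable f) (a : ℝ) :
    Integrable f (Measure.dirac a) := by
  refine ⟨hf.aestronglyMeasurable, ?_⟩
  simp [HasFiniteIntegral, lintegral_dirac' a hf.nnnorm.coe_nnreal_ennreal]

lemma gauss_int1 (μ : ℝ) (v : ℝ≥0) : Integrable (fun x => x - μ) (gaussianReal μ v) := by
  by_cases hv : v = 0
  · rw [hv, gaussianReal_zero_var]
    exact integrable_dirac'' (measurable_id.sub measurable_const) μ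
  · have hv' : (0:ℝ) < v := by positivity
    set b : ℝ := (2 * (v:ℝ))⁻¹ with hb
    have hbpos : 0 < b := by positivity
    rw [integrable_gaussianReal_iff μ v hv]
    have h1 : Integrable (fun x : ℝ => x * rexp (-b * x^2)) := integrable_mul_exp_neg_mul_sq hbpos
    have h2 := (h1.comp_sub_right μ).const_mul (√(2 * π * v))⁻¹
    refine h2.congr (Filter.Eventually.of_forall fun x => ?_)
    simp only [pdf_form μ v hv]
    ring

lemma gauss_int2 (μ : ℝ) (v : ℝ≥0) : Integrable (fun x => (x - μ)^2) (gaussianReal μ v) := by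
  by_cases hv : v = 0
  · rw [hv, gaussianReal_zero_var]
    exact integrable_dirac'' ((measurable_id.sub measurable_const).pow_const 2) μ
  · have hv' : (0:ℝ) < v := by positivity
    set b : ℝ := (2 * (v:ℝ))⁻¹ with hb
    have hbpos : 0 < b := by positivity
    rw [integrable_gaussianReal_iff μ v hv]
    have h1 : Integrable (fun x : ℝ => x^2 * rexp (-b * x^2)) := by
      have := integrable_rpow_mul_exp_neg_mul_sq hbpos (by norm_num : (-1:ℝ) < 2)
      refine this.congr (Filter.Eventually.of_forall fun x => ?_)
      dsimp only
      rw [show ((2:ℝ)) = ((2:ℕ):ℝ) by norm_num, Real.rpow_natCast]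
    have h2 := (h1.comp_sub_right μ).const_mul (√(2 * π * v))⁻¹
    refine h2.congr (Filter.Eventually.of_forall fun x => ?_)
    simp only [pdf_form μ v hv]
    ring

lemma gauss_m1 (μ : ℝ) (v : ℝ≥0) : ∫ x, (x - μ) ∂(gaussianReal μ v) = 0 := by
  by_cases hv : v = 0
  · rw [hv, gaussianReal_zero_var, integral_dirac]
    simp
  · have hv' : (0:ℝ) < v := by positivity
    set b : ℝ := (2 * (v:ℝ))⁻¹ with hb
    rw [integral_gaussianReal_eq μ v hv]
    have he : (fun x => gaussianPDFReal μ v x * (x - μ))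
        = fun x => (√(2 * π * v))⁻¹ * ((fun y => y * rexp (-b * y^2)) (x - μ)) := by
      funext x
      rw [pdf_form μ v hv]
      ring
    rw [he, integral_const_mul, integral_sub_right_eq_self (fun y => y * rexp (-b * y^2)) μ,
      odd_int, mul_zero]

lemma gauss_m2 (μ : ℝ) (v : ℝ≥0) : ∫ x, (x - μ)^2 ∂(gaussianReal μ v) = v := by
  by_cases hv : v = 0
  · rw [hv, gaussianReal_zero_var, integral_dirac]
    simp [hv]
  · have hv' : (0:ℝ) < v := by positivity
    set b : ℝ := (2 * (v:ℝ))⁻¹ with hb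
    have hbpos : 0 < b := by positivity
    rw [integral_gaussianReal_eq μ v hv]
    have he : (fun x => gaussianPDFReal μ v x * (x - μ)^2)
        = fun x => (√(2 * π * v))⁻¹ * ((fun y => y^2 * rexp (-b * y^2)) (x - μ)) := by
      funext x
      rw [pdf_form μ v hv]
      ring
    rw [he, integral_const_mul, integral_sub_right_eq_self (fun y => y^2 * rexp (-b * y^2)) μ,
      sq_int b hbpos, gamma_32]
    -- arithmetic: (√(2πv))⁻¹ * (((2v)⁻¹)^(-3/2) * (√π/2)) = v
    have h1 : b ^ (-(3:ℝ)/2) = (2*(v:ℝ)) ^ ((3:ℝ)/2) := by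
      rw [hb, ← Real.rpow_neg_one, ← Real.rpow_mul (by positivity)]
      norm_num
    rw [h1]
    have h2 : (2*(v:ℝ)) ^ ((3:ℝ)/2) = (2*(v:ℝ)) * √(2*(v:ℝ)) := by
      rw [show ((3:ℝ)/2) = 1 + 1/2 by norm_num, Real.rpow_add (by positivity), Real.rpow_one,
        ← Real.sqrt_eq_rpow]
    have h3 : √(2 * π * (v:ℝ)) = √(2*(v:ℝ)) * √π := by
      rw [show 2 * π * (v:ℝ) = (2*(v:ℝ)) * π by ring, Real.sqrt_mul (by positivity)]
    rw [h2, h3]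
    have hs : √(2*(v:ℝ)) > 0 := Real.sqrt_pos.mpr (by positivity)
    have hp : √π > 0 := Real.sqrt_pos.mpr Real.pi_pos
    field_simp

lemma coord_bound {Ω : Type*} [MeasurableSpace Ω] (P : Measure Ω) [IsProbabilityMeasure P]
    (X Y : Ω → ℝ) (hX : Measurable X) (hY : Measurable Y) (a b s t : ℝ)
    (hs : 0 ≤ s) (ht : 0 ≤ t)
    (hmX : Measure.map X P = gaussianReal a ((s^2).toNNReal))
    (hmY : Measure.map Y P = gaussianReal b ((t^2).toNNReal)) :
    Integrable (fun ω => (X ω - Y ω)^2) P ∧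
      (a - b)^2 + (s - t)^2 ≤ ∫ ω, (X ω - Y ω)^2 ∂P := by
  have coes : (((s^2).toNNReal : ℝ≥0) : ℝ) = s^2 := Real.coe_toNNReal _ (sq_nonneg s)
  have coet : (((t^2).toNNReal : ℝ≥0) : ℝ) = t^2 := Real.coe_toNNReal _ (sq_nonneg t)
  -- integrability of centered variables
  have hu : Integrable (fun ω => X ω - a) P := by
    have h := gauss_int1 a ((s^2).toNNReal)
    rw [← hmX] at h
    simpa [Function.comp_def] using
      (integrable_map_measure h.aestronglyMeasurable hX.aemeasurable).mp h
  have hw : Integrable (fun ω => Y ω - b) P := by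
    have h := gauss_int1 b ((t^2).toNNReal)
    rw [← hmY] at h
    simpa [Function.comp_def] using
      (integrable_map_measure h.aestronglyMeasurable hY.aemeasurable).mp h
  have hu2 : Integrable (fun ω => (X ω - a)^2) P := by
    have h := gauss_int2 a ((s^2).toNNReal)
    rw [← hmX] at h
    simpa [Function.comp_def] using
      (integrable_map_measure h.aestronglyMeasurable hX.aemeasurable).mp h
  have hw2 : Integrable (fun ω => (Y ω - b)^2) P := by
    have h := gauss_int2 b ((t^2).toNNReal)
    rw [← hmY] at h
    simpa [Function.comp_def] using
      (integrable_map_measure h.aestronglyMeasurable hY.aemeasurable).mp h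
  -- moments
  have Eu : ∫ ω, (X ω - a) ∂P = 0 := by
    have h := integral_map (φ := X) (μ := P) hX.aemeasurable (f := fun x => x - a)
      (by fun_prop)
    rw [hmX, gauss_m1] at h
    exact h.symm
  have Ew : ∫ ω, (Y ω - b) ∂P = 0 := by
    have h := integral_map (φ := Y) (μ := P) hY.aemeasurable (f := fun x => x - b)
      (by fun_prop)
    rw [hmY, gauss_m1] at h
    exact h.symm
  have Eu2 : ∫ ω, (X ω - a)^2 ∂P = s^2 := by
    have h := integral_map (φ := X) (μ := P) hX.aemeasurable (f := fun x => (x - a)^2)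
      (by exact ((measurable_id.sub measurable_const).pow_const 2).aestronglyMeasurable)
    rw [hmX, gauss_m2, coes] at h
    exact h.symm
  have Ew2 : ∫ ω, (Y ω - b)^2 ∂P = t^2 := by
    have h := integral_map (φ := Y) (μ := P) hY.aemeasurable (f := fun x => (x - b)^2)
      (by exact ((measurable_id.sub measurable_const).pow_const 2).aestronglyMeasurable)
    rw [hmY, gauss_m2, coet] at h
    exact h.symm
  -- integrability of the product
  have hbnd0 : Integrable (fun ω => ((X ω - a)^2 + (Y ω - b)^2)/2) P :=
    (hu2.add hw2).div_const 2
  have huw : Integrable (fun ω => (X ω - a) * (Y ω - b)) P := by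
    refine Integrable.mono' hbnd0
      (((hX.sub measurable_const).mul (hY.sub measurable_const)).aestronglyMeasurable)
      (Filter.Eventually.of_forall fun ω => ?_)
    rw [Real.norm_eq_abs, abs_mul]
    nlinarith [sq_nonneg (|X ω - a| - |Y ω - b|), sq_abs (X ω - a), sq_abs (Y ω - b),
      abs_nonneg (X ω - a), abs_nonneg (Y ω - b)]
  -- expansion
  have e : (fun ω => (X ω - Y ω)^2) = fun ω =>
      (X ω - a)^2 + (Y ω - b)^2 + (a-b)^2 - 2*((X ω - a)*(Y ω - b))
        + (2*(a-b))*(X ω - a) - (2*(a-b))*(Y ω - b) := by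
    funext ω; ring
  have J1 : Integrable (fun ω => (X ω - a)^2 + (Y ω - b)^2) P := hu2.add hw2
  have J2 : Integrable (fun ω => (X ω - a)^2 + (Y ω - b)^2 + (a-b)^2) P :=
    J1.add (integrable_const _)
  have J3 : Integrable (fun ω => 2*((X ω - a)*(Y ω - b))) P := huw.const_mul 2
  have J4 : Integrable (fun ω => (X ω - a)^2 + (Y ω - b)^2 + (a-b)^2
      - 2*((X ω - a)*(Y ω - b))) P := J2.sub J3
  have J5 : Integrable (fun ω => (2*(a-b))*(X ω - a)) P := hu.const_mul _
  have J6 : Integrable (fun ω => (X ω - a)^2 + (Y ω - b)^2 + (a-b)^2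
      - 2*((X ω - a)*(Y ω - b)) + (2*(a-b))*(X ω - a)) P := J4.add J5
  have J7 : Integrable (fun ω => (2*(a-b))*(Y ω - b)) P := hw.const_mul _
  have hXY2 : Integrable (fun ω => (X ω - Y ω)^2) P := by
    rw [e]; exact J6.sub J7
  have hE : ∫ ω, (X ω - Y ω)^2 ∂P
      = s^2 + t^2 + (a-b)^2 - 2 * ∫ ω, (X ω - a)*(Y ω - b) ∂P := by
    rw [e, integral_sub J6 J7, integral_add J4 J5, integral_sub J2 J3, integral_add J1
      (integrable_const _), integral_add hu2 hw2, integral_const, integral_const_mul,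
      integral_const_mul, integral_const_mul, Eu, Ew, Eu2, Ew2]
    simp
  -- Cauchy–Schwarz via AM–GM
  set I := ∫ ω, (X ω - a)*(Y ω - b) ∂P with hIdef
  have key : ∀ l : ℝ, 0 < l → I ≤ (l * s^2 + t^2 / l) / 2 := by
    intro l hl
    have K1 : Integrable (fun ω => l * (X ω - a)^2) P := hu2.const_mul l
    have K2 : Integrable (fun ω => (Y ω - b)^2 / l) P := hw2.div_const l
    have hbint : Integrable (fun ω => (l*(X ω - a)^2 + (Y ω - b)^2/l)/2) P :=
      (K1.add K2).div_const 2
    have mono : I ≤ ∫ ω, (l*(X ω - a)^2 + (Y ω - b)^2/l)/2 ∂P := by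
      refine integral_mono huw hbint fun ω => ?_
      have h1 : l * l⁻¹ = 1 := mul_inv_cancel₀ (ne_of_gt hl)
      have h2 := sq_nonneg (l*(X ω - a) - (Y ω - b))
      dsimp
      rw [div_eq_mul_inv ((Y ω - b)^2) l]
      nlinarith [mul_pos hl hl]
    calc I ≤ ∫ ω, (l*(X ω - a)^2 + (Y ω - b)^2/l)/2 ∂P := mono
      _ = (l * s^2 + t^2 / l) / 2 := by
          rw [integral_div, integral_add K1 K2, integral_const_mul, integral_div, Eu2, Ew2]
  have hI : I ≤ s * t := by
    refine le_of_forall_pos_le_add fun ε hε => ?_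
    set δ := min 1 (ε / (s + t + 1)) with hδdef
    have hδpos : 0 < δ := lt_min one_pos (div_pos hε (by linarith))
    have hsδ : 0 < s + δ := by linarith
    have htδ : 0 < t + δ := by linarith
    have hl : 0 < (t + δ)/(s + δ) := div_pos htδ hsδ
    have h1 := key _ hl
    have h2 : ((t+δ)/(s+δ) * s^2 + t^2/((t+δ)/(s+δ)))/2 ≤ (s+δ)*(t+δ) := by
      have eeq : ((t+δ)/(s+δ) * (s+δ)^2 + (t+δ)^2/((t+δ)/(s+δ)))/2 = (s+δ)*(t+δ) := by
        field_simp
        ring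
      have m1 : (t+δ)/(s+δ) * s^2 ≤ (t+δ)/(s+δ) * (s+δ)^2 :=
        mul_le_mul_of_nonneg_left (by nlinarith) hl.le
      have m2 : t^2/((t+δ)/(s+δ)) ≤ (t+δ)^2/((t+δ)/(s+δ)) :=
        (div_le_div_iff_of_pos_right hl).mpr (by nlinarith)
      linarith
    have h3 : (s+δ)*(t+δ) ≤ s*t + ε := by
      have hδ1 : δ ≤ 1 := min_le_left _ _
      have hδ2 : δ*(s+t+1) ≤ ε := (le_div_iff₀ (by linarith)).mp (min_le_right _ _)
      nlinarith
    linarith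
  exact ⟨hXY2, by rw [hE]; nlinarith [hI]⟩

end AuxGaussianMoments

section AuxMain
open scoped NNReal ENNReal

lemma my_map_eval_pi {ι : Type*} [Fintype ι] [DecidableEq ι] {α : ι → Type*}
    [∀ i, MeasurableSpace (α i)] (μ : ∀ i, Measure (α i)) [∀ i, IsProbabilityMeasure (μ i)]
    (i : ι) : (Measure.pi μ).map (Function.eval i) = μ i := by
  ext s hs
  rw [Measure.map_apply (measurable_pi_apply i) hs, Set.eval_preimage, Measure.pi_pi]
  rw [Finset.prod_eq_single i]
  · simp
  · intro j _ hj
    simp [Function.update_of_ne hj]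
  · simp

end AuxMain

/-- For Gaussian product measures `p = ⊗ᵢ N(μ₁ᵢ, σ₁ᵢ²)` and `q = ⊗ᵢ N(μ₂ᵢ, σ₂ᵢ²)` on
`ℝ^d` (diagonal covariance), every coupling `π` of `p` and `q` has quadratic transport
cost at least `‖μ₁ − μ₂‖₂² + Σᵢ (σ₁ᵢ − σ₂ᵢ)²`. -/
theorem diag_gaussian_quadratic_cost_lower_bound
    (d : ℕ) (hd : 1 ≤ d) (μ₁ μ₂ σ₁ σ₂ : Fin d → ℝ)
    (hσ₁ : ∀ i, 0 ≤ σ₁ i) (hσ₂ : ∀ i, 0 ≤ σ₂ i)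
    (π : Measure ((Fin d → ℝ) × (Fin d → ℝ))) [IsProbabilityMeasure π]
    (hπ₁ : π.fst = Measure.pi fun i => gaussianReal (μ₁ i) ((σ₁ i) ^ 2).toNNReal)
    (hπ₂ : π.snd = Measure.pi fun i => gaussianReal (μ₂ i) ((σ₂ i) ^ 2).toNNReal) :
    (∑ i, (μ₁ i - μ₂ i) ^ 2) + ∑ i, (σ₁ i - σ₂ i) ^ 2 ≤
      ∫ z, ∑ i, (z.1 i - z.2 i) ^ 2 ∂π := by
  have hmX : ∀ i, Measure.map (fun z : (Fin d → ℝ) × (Fin d → ℝ) => z.1 i) π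
      = gaussianReal (μ₁ i) ((σ₁ i)^2).toNNReal := by
    intro i
    have : (fun z : (Fin d → ℝ) × (Fin d → ℝ) => z.1 i)
        = (Function.eval i) ∘ Prod.fst := rfl
    rw [this, ← Measure.map_map (measurable_pi_apply i) measurable_fst]
    have hfst : π.map Prod.fst = π.fst := rfl
    rw [hfst, hπ₁, my_map_eval_pi]
  have hmY : ∀ i, Measure.map (fun z : (Fin d → ℝ) × (Fin d → ℝ) => z.2 i) π
      = gaussianReal (μ₂ i) ((σ₂ i)^2).toNNReal := by
    intro i
    have : (fun z : (Fin d → ℝ) × (Fin d → ℝ) => z.2 i)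
        = (Function.eval i) ∘ Prod.snd := rfl
    rw [this, ← Measure.map_map (measurable_pi_apply i) measurable_snd]
    have hsnd : π.map Prod.snd = π.snd := rfl
    rw [hsnd, hπ₂, my_map_eval_pi]
  have hcoord := fun i => coord_bound π (fun z => z.1 i) (fun z => z.2 i)
    ((measurable_pi_apply i).comp measurable_fst)
    ((measurable_pi_apply i).comp measurable_snd)
    (μ₁ i) (μ₂ i) (σ₁ i) (σ₂ i) (hσ₁ i) (hσ₂ i) (hmX i) (hmY i)
  have hsum : ∫ z, ∑ i, (z.1 i - z.2 i)^2 ∂π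
      = ∑ i, ∫ z, (z.1 i - z.2 i)^2 ∂π :=
    integral_finset_sum _ fun i _ => (hcoord i).1
  rw [hsum, ← Finset.sum_add_distrib]
  exact Finset.sum_le_sum fun i _ => (hcoord i).2
end
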